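/- arXiv:2508.04486 — 3 statements merged into one kernel-verified Lean document; each statement's English description precedes it below -/
import Mathlib

section
/- Pure-state pathwise form of Theorem 1 (quantum circuit complexity upper bounds fidelity change): Let n ≥ 1, d = 2^n, and let U be a unitary path on ℂ^d with Hermitian generator G(s) and real Pauli coefficients h_f(s) = 2^{-n}·Re(tr(P(f)·G(s))), so that G(s) = Σ_f h_f(s)·P(f). Then for every unit vector ψ₀ ∈ ℂ^d, writing ψ₁ = U(1)ψ₀, one has √(1 − |⟨ψ₀, ψ₁⟩|) ≤ ∫₀¹ Σ_f |h_f(s)| ds. (The left-hand side equals D_B(ρ₀, ρ₁)/√2, where D_B is the Bures distance and ρ_i = |ψ_i⟩⟨ψ_i|, and the right-hand side is the integrand cost whose infimum over paths is Nielsen's quantum circuit complexity.) -/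
/-!
STATEMENT 0: Pure-state pathwise form of Theorem 1 (quantum circuit complexity
upper bounds fidelity change): for a unitary path `U` on `ℂ^(2^n)` with Hermitian
generator `G(s)` and Pauli coefficients `h_f(s)`, and a unit vector `ψ₀` with
`ψ₁ = U(1)ψ₀`, one has `√(1 − |⟨ψ₀, ψ₁⟩|) ≤ ∫₀¹ Σ_f |h_f(s)| ds`.
-/

noncomputable section

open Matrix MeasureTheory Set
open scoped Matrix.Norms.L2Operator

/-- The 2×2 identity and the Pauli matrices X, Y, Z. -/
def pauli : Fin 4 → Matrix (Fin 2) (Fin 2) ℂ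
  | 0 => 1
  | 1 => !![0, 1; 1, 0]
  | 2 => !![0, -Complex.I; Complex.I, 0]
  | 3 => !![1, 0; 0, -1]

/-- The `n`-qubit Pauli string `P(f)` indexed by `f : Fin n → Fin 4`, with entries
`P(f)(x, y) = ∏ j, p_{f j}(x j, y j)`. -/
def pauliString {n : ℕ} (f : Fin n → Fin 4) :
    Matrix (Fin n → Fin 2) (Fin n → Fin 2) ℂ :=
  Matrix.of fun x y => ∏ j, pauli (f j) (x j) (y j)

/-- The (Hermitian) generator `G(s) = i • (U'(s)) * (U(s))ᴴ` of a unitary path. -/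
def generator {ι : Type*} [Fintype ι] [DecidableEq ι]
    (U : ℝ → Matrix ι ι ℂ) (s : ℝ) : Matrix ι ι ℂ :=
  Complex.I • (deriv U s * (U s)ᴴ)

/-- The real Pauli coefficients `h_f(s) = 2^{-n} · Re(tr(P(f) · G(s)))` of the generator,
so that `G(s) = Σ_f h_f(s) • P(f)` whenever `G(s)` is Hermitian. -/
def pauliCoeff {n : ℕ} (U : ℝ → Matrix (Fin n → Fin 2) (Fin n → Fin 2) ℂ)
    (f : Fin n → Fin 4) (s : ℝ) : ℝ :=
  ((2 : ℝ) ^ n)⁻¹ * ((pauliString f * generator U s).trace).re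

/-- The standard complex inner product `⟨φ, χ⟩ = Σ_i conj(φ i) * χ i` on `ι → ℂ`. -/
def cinner {ι : Type*} [Fintype ι] (φ χ : ι → ℂ) : ℂ := ∑ i, star (φ i) * χ i


namespace QCCAux

lemma pauli_conjTranspose (k : Fin 4) : (pauli k)ᴴ = pauli k := by
  fin_cases k <;> simp [pauli] <;> ext i j <;> fin_cases i <;> fin_cases j <;>
    simp [Matrix.conjTranspose_apply, Complex.ext_iff]

lemma pauli_mul_self (k : Fin 4) : pauli k * pauli k = 1 := by
  fin_cases k <;> ext i j <;> fin_cases i <;> fin_cases j <;>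
    simp [pauli, Matrix.mul_apply, Fin.sum_univ_two, Matrix.one_apply, Complex.ext_iff]

lemma pauli_sum (x y a b : Fin 2) :
    ∑ k : Fin 4, pauli k x y * pauli k a b =
      if x = b ∧ y = a then 2 else 0 := by
  fin_cases x <;> fin_cases y <;> fin_cases a <;> fin_cases b <;>
    simp [pauli, Fin.sum_univ_four, Matrix.one_apply, Complex.ext_iff] <;> norm_num

lemma pauliString_conjTranspose {n : ℕ} (f : Fin n → Fin 4) :
    (pauliString f)ᴴ = pauliString f := by
  ext x y
  simp only [Matrix.conjTranspose_apply, pauliString, Matrix.of_apply, star_prod]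
  refine Finset.prod_congr rfl fun j _ => ?_
  have := congrFun (congrFun (pauli_conjTranspose (f j)) (x j)) (y j)
  simpa [Matrix.conjTranspose_apply] using this

lemma pauliString_mul_self {n : ℕ} (f : Fin n → Fin 4) :
    pauliString f * pauliString f = 1 := by
  ext x y
  simp only [Matrix.mul_apply, pauliString, Matrix.of_apply]
  have : ∀ z : Fin n → Fin 2,
      (∏ j, pauli (f j) (x j) (z j)) * ∏ j, pauli (f j) (z j) (y j)
        = ∏ j, (pauli (f j) (x j) (z j) * pauli (f j) (z j) (y j)) := by
    intro z; rw [Finset.prod_mul_distrib]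
  simp_rw [this]
  have hps := (Fintype.prod_sum (fun (j : Fin n) (t : Fin 2) =>
    pauli (f j) (x j) t * pauli (f j) t (y j))).symm
  rw [hps]
  have : ∀ j : Fin n, ∑ t : Fin 2, pauli (f j) (x j) t * pauli (f j) t (y j)
      = (1 : Matrix (Fin 2) (Fin 2) ℂ) (x j) (y j) := by
    intro j
    rw [← Matrix.mul_apply, pauli_mul_self]
  simp_rw [this]
  by_cases h : x = y
  · subst h; simp [Matrix.one_apply]
  · obtain ⟨j, hj⟩ := Function.ne_iff.mp h
    rw [Matrix.one_apply_ne h]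
    exact Finset.prod_eq_zero (Finset.mem_univ j) (by simp [Matrix.one_apply, hj])

lemma pauliString_sum {n : ℕ} (x y a b : Fin n → Fin 2) :
    ∑ f : Fin n → Fin 4, pauliString f x y * pauliString f a b =
      if x = b ∧ y = a then (2:ℂ)^n else 0 := by
  have key : ∀ f : Fin n → Fin 4,
      pauliString f x y * pauliString f a b
        = ∏ j, (pauli (f j) (x j) (y j) * pauli (f j) (a j) (b j)) := by
    intro f; simp [pauliString, Finset.prod_mul_distrib]
  simp_rw [key]
  have hps := (Fintype.prod_sum (fun (j : Fin n) (k : Fin 4) =>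
    pauli k (x j) (y j) * pauli k (a j) (b j))).symm
  rw [hps]
  simp_rw [pauli_sum]
  by_cases h : x = b ∧ y = a
  · obtain ⟨h1, h2⟩ := h
    subst h1; subst h2
    simp
  · rw [if_neg h]
    have : ∃ j, ¬(x j = b j ∧ y j = a j) := by
      by_contra hc
      push_neg at hc
      exact h ⟨funext fun j => (hc j).1, funext fun j => (hc j).2⟩
    obtain ⟨j, hj⟩ := this
    exact Finset.prod_eq_zero (Finset.mem_univ j) (by rw [if_neg hj])

section
variable {ι : Type*} [Fintype ι] [DecidableEq ι] [Nonempty ι]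

lemma matrix_norm_one : ‖(1 : Matrix ι ι ℂ)‖ = 1 := by
  rw [Matrix.cstar_norm_def, _root_.map_one]
  exact norm_one

lemma matrix_norm_of_unitary {A : Matrix ι ι ℂ} (h : Aᴴ * A = 1) : ‖A‖ = 1 := by
  have h2 : ‖A‖ * ‖A‖ = 1 := by
    rw [← Matrix.l2_opNorm_conjTranspose_mul_self, h, matrix_norm_one]
  nlinarith [norm_nonneg A]

end

lemma pauli_expansion {n : ℕ} (M : Matrix (Fin n → Fin 2) (Fin n → Fin 2) ℂ) :
    M = ∑ f : Fin n → Fin 4, (((2:ℂ)^n)⁻¹ * (pauliString f * M).trace) • pauliString f := by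
  ext x y
  simp only [Matrix.sum_apply, Matrix.smul_apply, smul_eq_mul, Matrix.trace,
    Matrix.diag_apply, Matrix.mul_apply]
  have step : ∀ f : Fin n → Fin 4,
      ((2:ℂ)^n)⁻¹ * (∑ a, ∑ b, pauliString f a b * M b a) * pauliString f x y
        = ∑ a, ∑ b, ((2:ℂ)^n)⁻¹ * (M b a * (pauliString f a b * pauliString f x y)) := by
    intro f
    have h1 : (∑ a, ∑ b, pauliString f a b * M b a) * pauliString f x y
        = ∑ a, ∑ b, M b a * (pauliString f a b * pauliString f x y) := by
      rw [Finset.sum_mul]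
      refine Finset.sum_congr rfl fun a _ => ?_
      rw [Finset.sum_mul]
      exact Finset.sum_congr rfl fun b _ => by ring
    rw [mul_assoc, h1, Finset.mul_sum]
    exact Finset.sum_congr rfl fun a _ => by rw [Finset.mul_sum]
  simp_rw [step]
  rw [Finset.sum_comm]
  have : ∀ a, ∑ f : Fin n → Fin 4, ∑ b,
      ((2:ℂ)^n)⁻¹ * (M b a * (pauliString f a b * pauliString f x y))
      = ∑ b, ((2:ℂ)^n)⁻¹ * (M b a * ∑ f : Fin n → Fin 4, (pauliString f a b * pauliString f x y)) := by
    intro a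
    rw [Finset.sum_comm]
    refine Finset.sum_congr rfl fun b _ => ?_
    simp [Finset.mul_sum]
  simp_rw [this, pauliString_sum]
  have h2n : ((2:ℂ)^n) ≠ 0 := pow_ne_zero _ two_ne_zero
  rw [Finset.sum_eq_single y]
  · rw [Finset.sum_eq_single x]
    · rw [if_pos ⟨rfl, rfl⟩, mul_comm (M x y), ← mul_assoc, inv_mul_cancel₀ h2n, one_mul]
    · intro b _ hb; rw [if_neg (by tauto), mul_zero, mul_zero]
    · simp
  · intro a _ ha; exact Finset.sum_eq_zero fun b _ => by rw [if_neg (by tauto), mul_zero, mul_zero]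
  · simp

lemma pauliString_norm {n : ℕ} (f : Fin n → Fin 4) : ‖pauliString f‖ = 1 :=
  matrix_norm_of_unitary (by rw [pauliString_conjTranspose, pauliString_mul_self])

lemma trace_pauli_real {n : ℕ} {M : Matrix (Fin n → Fin 2) (Fin n → Fin 2) ℂ}
    (hM : Mᴴ = M) (f : Fin n → Fin 4) :
    ((pauliString f * M).trace : ℂ) = (((pauliString f * M).trace).re : ℂ) := by
  have h : star ((pauliString f * M).trace) = (pauliString f * M).trace := by
    rw [← Matrix.trace_conjTranspose, Matrix.conjTranspose_mul, hM,
      pauliString_conjTranspose, Matrix.trace_mul_comm]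
  exact ((Complex.conj_eq_iff_re).mp h).symm

lemma hermitian_norm_le {n : ℕ} (M : Matrix (Fin n → Fin 2) (Fin n → Fin 2) ℂ)
    (hM : Mᴴ = M) :
    ‖M‖ ≤ ∑ f : Fin n → Fin 4, |((2:ℝ)^n)⁻¹ * ((pauliString f * M).trace).re| := by
  calc ‖M‖ = ‖∑ f : Fin n → Fin 4, (((2:ℂ)^n)⁻¹ * (pauliString f * M).trace) • pauliString f‖ := by
        rw [← pauli_expansion]
    _ ≤ ∑ f : Fin n → Fin 4, ‖(((2:ℂ)^n)⁻¹ * (pauliString f * M).trace) • pauliString f‖ :=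
        norm_sum_le _ _
    _ = ∑ f : Fin n → Fin 4, |((2:ℝ)^n)⁻¹ * ((pauliString f * M).trace).re| := by
        refine Finset.sum_congr rfl fun f _ => ?_
        rw [norm_smul, pauliString_norm, mul_one, trace_pauli_real hM]
        have : (((2:ℂ)^n)⁻¹ * (((pauliString f * M).trace).re : ℂ))
            = ((((2:ℝ)^n)⁻¹ * ((pauliString f * M).trace).re : ℝ) : ℂ) := by
          push_cast; ring
        rw [this, Complex.norm_real]
        simp

section
variable {ι : Type*} [Fintype ι] [DecidableEq ι] [Nonempty ι]
variable {U : ℝ → Matrix ι ι ℂ}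

lemma generator_key (hUdiff : ∀ s ∈ Icc (0:ℝ) 1, DifferentiableAt ℝ U s)
    (hUunit : ∀ s ∈ Icc (0:ℝ) 1, U s * (U s)ᴴ = 1) {s : ℝ} (hs : s ∈ Icc (0:ℝ) 1) :
    deriv U s * (U s)ᴴ + U s * (deriv U s)ᴴ = 0 := by
  have hUc : HasDerivAt U (deriv U s) s := (hUdiff s hs).hasDerivAt
  have hstar : HasDerivAt (fun t => (U t)ᴴ) ((deriv U s)ᴴ) s := hUc.star
  have hprod : HasDerivAt (fun t => U t * (U t)ᴴ)
      (deriv U s * (U s)ᴴ + U s * (deriv U s)ᴴ) s := hUc.mul hstar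
  have hconst : HasDerivWithinAt (fun t => U t * (U t)ᴴ) 0 (Icc (0:ℝ) 1) s :=
    (hasDerivWithinAt_const s _ (1 : Matrix ι ι ℂ)).congr
      (fun t ht => hUunit t ht) (hUunit s hs)
  have hu := (uniqueDiffOn_Icc (zero_lt_one)) s hs
  have e1 := hprod.hasDerivWithinAt.derivWithin hu
  have e2 := hconst.derivWithin hu
  rw [← e1, e2]

lemma generator_herm (hUdiff : ∀ s ∈ Icc (0:ℝ) 1, DifferentiableAt ℝ U s)
    (hUunit : ∀ s ∈ Icc (0:ℝ) 1, U s * (U s)ᴴ = 1) {s : ℝ} (hs : s ∈ Icc (0:ℝ) 1) :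
    (generator U s)ᴴ = generator U s := by
  have key := generator_key hUdiff hUunit hs
  have h1 : U s * (deriv U s)ᴴ = -(deriv U s * (U s)ᴴ) := by
    rw [eq_neg_iff_add_eq_zero, add_comm]; exact key
  rw [generator, Matrix.conjTranspose_smul, Matrix.conjTranspose_mul,
    Matrix.conjTranspose_conjTranspose, h1]
  simp [Complex.star_def, generator]

lemma deriv_norm_le_generator (hUdiff : ∀ s ∈ Icc (0:ℝ) 1, DifferentiableAt ℝ U s)
    (hUunit : ∀ s ∈ Icc (0:ℝ) 1, U s * (U s)ᴴ = 1) {s : ℝ} (hs : s ∈ Icc (0:ℝ) 1) :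
    ‖deriv U s‖ ≤ ‖generator U s‖ := by
  have hUU : (U s)ᴴ * U s = 1 := mul_eq_one_comm.mp (hUunit s hs)
  have hd : deriv U s = (-Complex.I) • (generator U s * U s) := by
    rw [generator, Matrix.smul_mul, smul_smul]
    simp [mul_assoc, hUU]
  calc ‖deriv U s‖ = ‖(-Complex.I) • (generator U s * U s)‖ := by rw [← hd]
    _ = ‖generator U s * U s‖ := by rw [norm_smul]; simp
    _ ≤ ‖generator U s‖ * ‖U s‖ := Matrix.l2_opNorm_mul _ _
    _ = ‖generator U s‖ := by rw [matrix_norm_of_unitary hUU, mul_one]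

end

end QCCAux

open QCCAux in
theorem qcc_upper_bounds_fidelity_change (n : ℕ) (hn : 1 ≤ n)
    (U : ℝ → Matrix (Fin n → Fin 2) (Fin n → Fin 2) ℂ)
    (hUdiff : ∀ s ∈ Icc (0:ℝ) 1, DifferentiableAt ℝ U s)
    (hUderiv : ContinuousOn (deriv U) (Icc (0:ℝ) 1))
    (hUunit : ∀ s ∈ Icc (0:ℝ) 1, U s * (U s)ᴴ = 1)
    (hU0 : U 0 = 1)
    (ψ₀ : (Fin n → Fin 2) → ℂ) (hψ₀ : cinner ψ₀ ψ₀ = 1)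
    (ψ₁ : (Fin n → Fin 2) → ℂ) (hψ₁ : ψ₁ = (U 1).mulVec ψ₀) :
    Real.sqrt (1 - ‖cinner ψ₀ ψ₁‖) ≤
      ∫ s in (0:ℝ)..1, ∑ f : Fin n → Fin 4, |pauliCoeff U f s| := by
  classical
  have h01 : (0:ℝ) ≤ 1 := zero_le_one
  have hUcont : ContinuousOn U (Icc (0:ℝ) 1) :=
    fun t ht => (hUdiff t ht).continuousAt.continuousWithinAt
  -- the vector path
  let Llin : Matrix (Fin n → Fin 2) (Fin n → Fin 2) ℂ →ₗ[ℂ] EuclideanSpace ℂ (Fin n → Fin 2) :=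
    { toFun := fun A => (EuclideanSpace.equiv (Fin n → Fin 2) ℂ).symm (A.mulVec ψ₀)
      map_add' := fun A B => by
        ext i; simp [Matrix.add_mulVec]
      map_smul' := fun r A => by
        ext i; simp [Matrix.smul_mulVec] }
  let L : Matrix (Fin n → Fin 2) (Fin n → Fin 2) ℂ →L[ℂ] EuclideanSpace ℂ (Fin n → Fin 2) :=
    Llin.toContinuousLinearMap
  let φ : ℝ → EuclideanSpace ℂ (Fin n → Fin 2) := fun t => L (U t)
  have hLapply : ∀ A : Matrix (Fin n → Fin 2) (Fin n → Fin 2) ℂ,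
      L A = (EuclideanSpace.equiv (Fin n → Fin 2) ℂ).symm (A.mulVec ψ₀) := fun A => rfl
  have hφderiv : ∀ t ∈ uIcc (0:ℝ) 1, HasDerivAt φ (L (deriv U t)) t := by
    intro t ht
    rw [uIcc_of_le h01] at ht
    exact ((L.restrictScalars ℝ).hasFDerivAt.comp_hasDerivAt t (hUdiff t ht).hasDerivAt)
  have hintL : IntervalIntegrable (fun t => L (deriv U t)) MeasureTheory.volume 0 1 := by
    apply ContinuousOn.intervalIntegrable
    rw [uIcc_of_le h01]
    exact L.continuous.comp_continuousOn hUderiv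
  have hFTC : ∫ t in (0:ℝ)..1, L (deriv U t) = φ 1 - φ 0 :=
    intervalIntegral.integral_eq_sub_of_hasDerivAt hφderiv hintL
  -- norms of the endpoints
  have hinner : ∀ χ₁ χ₂ : (Fin n → Fin 2) → ℂ,
      (inner ℂ ((EuclideanSpace.equiv (Fin n → Fin 2) ℂ).symm χ₁)
        ((EuclideanSpace.equiv (Fin n → Fin 2) ℂ).symm χ₂) : ℂ) = cinner χ₁ χ₂ := by
    intro χ₁ χ₂
    rw [PiLp.inner_apply]
    simp [cinner, mul_comm]
  have hnorm_of_cinner : ∀ χ : (Fin n → Fin 2) → ℂ, cinner χ χ = 1 →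
      ‖(EuclideanSpace.equiv (Fin n → Fin 2) ℂ).symm χ‖ = 1 := by
    intro χ hχ
    have h1 : (inner ℂ ((EuclideanSpace.equiv (Fin n → Fin 2) ℂ).symm χ)
        ((EuclideanSpace.equiv (Fin n → Fin 2) ℂ).symm χ) : ℂ)
        = ((‖(EuclideanSpace.equiv (Fin n → Fin 2) ℂ).symm χ‖ : ℝ) : ℂ) ^ 2 :=
      inner_self_eq_norm_sq_to_K _
    rw [hinner, hχ] at h1
    have h2 : (‖(EuclideanSpace.equiv (Fin n → Fin 2) ℂ).symm χ‖ : ℝ) ^ 2 = 1 := by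
      exact_mod_cast h1.symm
    nlinarith [norm_nonneg ((EuclideanSpace.equiv (Fin n → Fin 2) ℂ).symm χ)]
  have hψ₁ψ₁ : cinner ψ₁ ψ₁ = 1 := by
    have hUU : (U 1)ᴴ * U 1 = 1 :=
      mul_eq_one_comm.mp (hUunit 1 (by constructor <;> norm_num))
    have hcd : ∀ χ₁ χ₂ : (Fin n → Fin 2) → ℂ,
        cinner χ₁ χ₂ = dotProduct (star χ₁) χ₂ := by
      intro χ₁ χ₂; simp [cinner, dotProduct]
    rw [hψ₁, hcd, Matrix.star_mulVec, dotProduct_mulVec, Matrix.vecMul_vecMul,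
      hUU, Matrix.vecMul_one, ← hcd]
    exact hψ₀
  have hφ0 : φ 0 = (EuclideanSpace.equiv (Fin n → Fin 2) ℂ).symm ψ₀ := by
    rw [show φ 0 = L (U 0) from rfl, hLapply, hU0, Matrix.one_mulVec]
  have hφ1 : φ 1 = (EuclideanSpace.equiv (Fin n → Fin 2) ℂ).symm ψ₁ := by
    rw [show φ 1 = L (U 1) from rfl, hLapply, hψ₁]
  have hn0 : ‖φ 0‖ = 1 := by rw [hφ0]; exact hnorm_of_cinner ψ₀ hψ₀
  have hn1 : ‖φ 1‖ = 1 := by rw [hφ1]; exact hnorm_of_cinner ψ₁ hψ₁ψ₁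
  have hinner01 : (inner ℂ (φ 0) (φ 1) : ℂ) = cinner ψ₀ ψ₁ := by
    rw [hφ0, hφ1, hinner]
  -- step 1 : √(1 - |c|) ≤ ‖φ 1 - φ 0‖
  have hre : (cinner ψ₀ ψ₁).re ≤ ‖cinner ψ₀ ψ₁‖ := Complex.re_le_norm _
  have hsub : ‖φ 0 - φ 1‖ ^ 2 = 2 - 2 * (cinner ψ₀ ψ₁).re := by
    rw [norm_sub_sq (𝕜 := ℂ), hn0, hn1, hinner01]
    simp only [RCLike.re_to_complex]
    ring
  have hstep1 : 1 - ‖cinner ψ₀ ψ₁‖ ≤ ‖φ 1 - φ 0‖ ^ 2 := by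
    rw [norm_sub_rev, hsub]
    linarith [hre, hsub, sq_nonneg (‖φ 0 - φ 1‖)]
  -- step 2 : pointwise bound on the derivative
  have hptwise : ∀ s ∈ Icc (0:ℝ) 1,
      ‖L (deriv U s)‖ ≤ ∑ f : Fin n → Fin 4, |pauliCoeff U f s| := by
    intro s hs
    have h1 : ‖L (deriv U s)‖
        ≤ ‖deriv U s‖ * ‖(EuclideanSpace.equiv (Fin n → Fin 2) ℂ).symm ψ₀‖ := by
      rw [hLapply]
      exact Matrix.l2_opNorm_mulVec (deriv U s) ((EuclideanSpace.equiv (Fin n → Fin 2) ℂ).symm ψ₀)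
    rw [hnorm_of_cinner ψ₀ hψ₀, mul_one] at h1
    refine h1.trans ((deriv_norm_le_generator hUdiff hUunit hs).trans ?_)
    have := hermitian_norm_le (generator U s) (generator_herm hUdiff hUunit hs)
    simpa [pauliCoeff] using this
  -- step 3 : continuity and integrability
  have hGcont : ContinuousOn (fun s => generator U s) (Icc (0:ℝ) 1) := by
    have hstarC : ContinuousOn (fun s => (U s)ᴴ) (Icc (0:ℝ) 1) := by
      simpa [Matrix.star_eq_conjTranspose, Function.comp_def] using
        (continuous_star.comp_continuousOn hUcont)
    exact (hUderiv.mul hstarC).const_smul Complex.I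
  have htrC : Continuous (Matrix.trace : Matrix (Fin n → Fin 2) (Fin n → Fin 2) ℂ → ℂ) :=
    LinearMap.continuous_of_finiteDimensional (Matrix.traceLinearMap (Fin n → Fin 2) ℂ ℂ)
  have hcoefC : ∀ f : Fin n → Fin 4,
      ContinuousOn (fun s => pauliCoeff U f s) (Icc (0:ℝ) 1) := by
    intro f
    have h1 : ContinuousOn (fun s => pauliString f * generator U s) (Icc (0:ℝ) 1) :=
      continuousOn_const.mul hGcont
    have h2 : ContinuousOn (fun s => (pauliString f * generator U s).trace) (Icc (0:ℝ) 1) :=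
      htrC.comp_continuousOn h1
    exact continuousOn_const.mul (Complex.continuous_re.comp_continuousOn h2)
  have hintg : IntervalIntegrable (fun s => ∑ f : Fin n → Fin 4, |pauliCoeff U f s|)
      MeasureTheory.volume 0 1 := by
    apply ContinuousOn.intervalIntegrable
    rw [uIcc_of_le h01]
    exact continuousOn_finset_sum _ fun f _ => (hcoefC f).abs
  have hintn : IntervalIntegrable (fun s => ‖L (deriv U s)‖) MeasureTheory.volume 0 1 := by
    apply ContinuousOn.intervalIntegrable
    rw [uIcc_of_le h01]
    exact (L.continuous.comp_continuousOn hUderiv).norm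
  -- step 4 : assemble
  have hstep2 : ‖φ 1 - φ 0‖ ≤ ∫ s in (0:ℝ)..1, ∑ f : Fin n → Fin 4, |pauliCoeff U f s| := by
    calc ‖φ 1 - φ 0‖ = ‖∫ t in (0:ℝ)..1, L (deriv U t)‖ := by rw [hFTC]
      _ ≤ ∫ t in (0:ℝ)..1, ‖L (deriv U t)‖ :=
          intervalIntegral.norm_integral_le_integral_norm h01
      _ ≤ ∫ s in (0:ℝ)..1, ∑ f : Fin n → Fin 4, |pauliCoeff U f s| :=
          intervalIntegral.integral_mono_on h01 hintn hintg hptwise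
  calc Real.sqrt (1 - ‖cinner ψ₀ ψ₁‖)
      ≤ Real.sqrt (‖φ 1 - φ 0‖ ^ 2) := Real.sqrt_le_sqrt hstep1
    _ = ‖φ 1 - φ 0‖ := by rw [Real.sqrt_sq (norm_nonneg _)]
    _ ≤ _ := hstep2
end
end

section
/- First inequality of Theorem 1, pathwise pure-state form (quantum Fisher complexity is below Nielsen's cost): Let n ≥ 1, d = 2^n, and let U be a unitary path on ℂ^d with Hermitian generator G(s) and real Pauli coefficients h_f(s) = 2^{-n}·Re(tr(P(f)·G(s))). Then for every unit vector ψ₀ ∈ ℂ^d, ∫₀¹ √(Var_{U(s)ψ₀}(G(s))) ds ≤ ∫₀¹ Σ_f |h_f(s)| ds. (The left-hand side equals (1/2)∫₀¹ √(F_Q(s)) ds, where F_Q(s) = 4·Var_{U(s)ψ₀}(G(s)) is the pure-state quantum Fisher information of the path.) -/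
/-!
STATEMENT 1: First inequality of Theorem 1, pathwise pure-state form (quantum Fisher
complexity is below Nielsen's cost):
`∫₀¹ √(Var_{U(s)ψ₀}(G(s))) ds ≤ ∫₀¹ Σ_f |h_f(s)| ds`.
-/

noncomputable section

open Matrix MeasureTheory Set
open scoped Matrix.Norms.L2Operator

/-- The variance `Var_ψ(A) = ⟨ψ, A²ψ⟩ − ⟨ψ, Aψ⟩²` of a (Hermitian) matrix `A` in a
unit vector `ψ` (real, since `A` is Hermitian). -/
def matVar {ι : Type*} [Fintype ι] (A : Matrix ι ι ℂ) (ψ : ι → ℂ) : ℝ :=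
  (cinner ψ ((A * A).mulVec ψ)).re - ((cinner ψ (A.mulVec ψ)).re) ^ 2

/-! ### Auxiliary lemmas on Pauli matrices -/

lemma pauli_star (k : Fin 4) (a b : Fin 2) : star (pauli k a b) = pauli k b a := by
  fin_cases k <;> fin_cases a <;> fin_cases b <;>
    simp [pauli, Matrix.one_apply]

lemma pauli_complete (a b c d : Fin 2) :
    ∑ k : Fin 4, pauli k a b * pauli k c d =
      if a = d ∧ b = c then 2 else 0 := by
  fin_cases a <;> fin_cases b <;> fin_cases c <;> fin_cases d <;>
    simp [Fin.sum_univ_four, pauli, Matrix.one_apply] <;> ring_nf <;>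
    norm_num [Complex.I_sq]

lemma pauli_mul_self (k : Fin 4) : pauli k * pauli k = 1 := by
  fin_cases k <;> ext a b <;> fin_cases a <;> fin_cases b <;>
    simp [pauli, Matrix.mul_apply, Fin.sum_univ_two, Matrix.one_apply] <;> ring_nf <;>
    norm_num [Complex.I_sq]

lemma pauliString_conjTranspose {n : ℕ} (f : Fin n → Fin 4) :
    (pauliString f)ᴴ = pauliString f := by
  ext x y
  simp only [conjTranspose_apply, pauliString, Matrix.of_apply, star_prod, pauli_star]

lemma pauliString_mul_self {n : ℕ} (f : Fin n → Fin 4) :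
    pauliString f * pauliString f = 1 := by
  ext x y
  rw [Matrix.mul_apply]
  simp only [pauliString, Matrix.of_apply]
  have : ∀ z : Fin n → Fin 2,
      (∏ j, pauli (f j) (x j) (z j)) * ∏ j, pauli (f j) (z j) (y j)
        = ∏ j, (pauli (f j) (x j) (z j) * pauli (f j) (z j) (y j)) := by
    intro z; rw [Finset.prod_mul_distrib]
  simp_rw [this]
  rw [← Fintype.prod_sum (fun j c => pauli (f j) (x j) c * pauli (f j) c (y j))]
  have : ∀ j : Fin n, ∑ c : Fin 2, pauli (f j) (x j) c * pauli (f j) c (y j)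
      = (1 : Matrix (Fin 2) (Fin 2) ℂ) (x j) (y j) := by
    intro j
    rw [← Matrix.mul_apply, pauli_mul_self]
  simp_rw [this, Matrix.one_apply]
  by_cases h : x = y
  · simp [h]
  · obtain ⟨j, hj⟩ := Function.ne_iff.mp h
    rw [if_neg h]
    exact Finset.prod_eq_zero (Finset.mem_univ j) (by simp [hj])

lemma sum_pauliString {n : ℕ} (z w x y : Fin n → Fin 2) :
    ∑ f : Fin n → Fin 4, pauliString f z w * pauliString f x y
      = if z = y ∧ w = x then (2 : ℂ) ^ n else 0 := by
  simp only [pauliString, Matrix.of_apply]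
  have : ∀ f : Fin n → Fin 4,
      (∏ j, pauli (f j) (z j) (w j)) * ∏ j, pauli (f j) (x j) (y j)
        = ∏ j, (pauli (f j) (z j) (w j) * pauli (f j) (x j) (y j)) := by
    intro f; rw [Finset.prod_mul_distrib]
  simp_rw [this]
  rw [← Fintype.prod_sum (fun j k => pauli k (z j) (w j) * pauli k (x j) (y j))]
  simp_rw [pauli_complete]
  by_cases h : z = y ∧ w = x
  · simp [h.1, h.2]
  · rw [if_neg h]
    rw [not_and_or] at h
    rcases h with h | h
    · obtain ⟨j, hj⟩ := Function.ne_iff.mp h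
      exact Finset.prod_eq_zero (Finset.mem_univ j) (by simp [hj])
    · obtain ⟨j, hj⟩ := Function.ne_iff.mp h
      exact Finset.prod_eq_zero (Finset.mem_univ j) (by simp [hj])

lemma pauli_expand {n : ℕ} (A : Matrix (Fin n → Fin 2) (Fin n → Fin 2) ℂ) :
    ∑ f : Fin n → Fin 4, (pauliString f * A).trace • pauliString f
      = ((2 : ℂ) ^ n) • A := by
  ext x y
  simp only [Matrix.sum_apply, Matrix.smul_apply, Matrix.trace, Matrix.diag,
    Matrix.mul_apply, smul_eq_mul, Finset.sum_mul]
  rw [Finset.sum_comm]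
  have h1 : ∀ z : Fin n → Fin 2,
      ∑ f : Fin n → Fin 4, ∑ w, pauliString f z w * A w z * pauliString f x y
        = ∑ w, A w z * if z = y ∧ w = x then (2 : ℂ) ^ n else 0 := by
    intro z
    rw [Finset.sum_comm]
    refine Finset.sum_congr rfl fun w _ => ?_
    rw [← sum_pauliString z w x y, Finset.mul_sum]
    refine Finset.sum_congr rfl fun f _ => by ring
  have h2 : ∀ z : Fin n → Fin 2,
      (∑ w, A w z * if z = y ∧ w = x then (2 : ℂ) ^ n else 0)
        = if z = y then A x z * (2:ℂ)^n else 0 := by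
    intro z
    by_cases hz : z = y
    · simp [hz]
    · simp [hz]
  rw [Finset.sum_congr rfl fun z _ => (h1 z).trans (h2 z)]
  simp [mul_comm]

/-! ### Inner-product bridges -/

lemma cinner_eq_inner {ι : Type*} [Fintype ι] (φ χ : ι → ℂ) :
    cinner φ χ = inner ℂ ((WithLp.equiv 2 (ι → ℂ)).symm φ) ((WithLp.equiv 2 (ι → ℂ)).symm χ) := by
  simp [cinner, PiLp.inner_apply, RCLike.inner_apply, mul_comm]

lemma cinner_toCLM {ι : Type*} [Fintype ι] [DecidableEq ι] (A : Matrix ι ι ℂ)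
    (φ χ : ι → ℂ) :
    cinner φ (A.mulVec χ)
      = inner ℂ ((WithLp.equiv 2 (ι → ℂ)).symm φ)
          (toEuclideanCLM (𝕜 := ℂ) A ((WithLp.equiv 2 (ι → ℂ)).symm χ)) := by
  rw [cinner_eq_inner]
  rfl

lemma norm_sq_clm {ι : Type*} [Fintype ι] [DecidableEq ι] (A : Matrix ι ι ℂ)
    (hA : Aᴴ = A) (φ : ι → ℂ) :
    (cinner φ ((A * A).mulVec φ)).re
      = ‖toEuclideanCLM (𝕜 := ℂ) A ((WithLp.equiv 2 (ι → ℂ)).symm φ)‖ ^ 2 := by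
  set Φ := (WithLp.equiv 2 (ι → ℂ)).symm φ
  set T := toEuclideanCLM (𝕜 := ℂ) A
  have hsa : ContinuousLinearMap.adjoint T = T := by
    rw [← ContinuousLinearMap.star_eq_adjoint, ← map_star]
    exact congrArg _ (by rw [Matrix.star_eq_conjTranspose, hA])
  have : cinner φ ((A * A).mulVec φ) = inner ℂ (T Φ) (T Φ) := by
    rw [cinner_toCLM, _root_.map_mul]
    rw [ContinuousLinearMap.mul_apply, ← ContinuousLinearMap.adjoint_inner_left, hsa]
  rw [this, ← inner_self_eq_norm_sq (𝕜 := ℂ)]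
  simp [RCLike.re_to_complex]

lemma clm_eq_mulVec {ι : Type*} [Fintype ι] [DecidableEq ι] (A : Matrix ι ι ℂ)
    (φ : ι → ℂ) :
    toEuclideanCLM (𝕜 := ℂ) A ((WithLp.equiv 2 (ι → ℂ)).symm φ)
      = (WithLp.equiv 2 (ι → ℂ)).symm (A.mulVec φ) := by
  rfl

lemma sum_mulVec' {ι α : Type*} [Fintype ι] [Fintype α] (M : α → Matrix ι ι ℂ)
    (v : ι → ℂ) : (∑ a, M a).mulVec v = ∑ a, (M a).mulVec v := by
  ext i
  simp only [Matrix.mulVec, dotProduct, Matrix.sum_apply, Finset.sum_apply,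
    Finset.sum_mul]
  rw [Finset.sum_comm]

/-! ### The pointwise variance bound -/

lemma sqrt_matVar_le {n : ℕ} (A : Matrix (Fin n → Fin 2) (Fin n → Fin 2) ℂ)
    (hA : Aᴴ = A) (ψ : (Fin n → Fin 2) → ℂ) (hψ : cinner ψ ψ = 1) :
    Real.sqrt (matVar A ψ)
      ≤ ∑ f : Fin n → Fin 4, |((2:ℝ)^n)⁻¹ * ((pauliString f * A).trace).re| := by
  classical
  set e := (WithLp.equiv 2 ((Fin n → Fin 2) → ℂ)).symm with he
  set h : (Fin n → Fin 4) → ℝ :=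
    fun f => ((2:ℝ)^n)⁻¹ * ((pauliString f * A).trace).re with hh
  -- coefficients are real
  have hre : ∀ f : Fin n → Fin 4,
      (((((pauliString f * A).trace).re : ℝ)) : ℂ) = (pauliString f * A).trace := by
    intro f
    rw [← Complex.conj_eq_iff_re]
    calc (starRingEnd ℂ) (pauliString f * A).trace
        = ((pauliString f * A)ᴴ).trace := by
          rw [Matrix.trace_conjTranspose]; rfl
      _ = (Aᴴ * (pauliString f)ᴴ).trace := by rw [Matrix.conjTranspose_mul]
      _ = (A * pauliString f).trace := by rw [hA, pauliString_conjTranspose]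
      _ = (pauliString f * A).trace := Matrix.trace_mul_comm _ _
  -- expansion of A
  have hexp : A = ∑ f : Fin n → Fin 4, ((h f : ℝ) : ℂ) • pauliString f := by
    have h2n : ((2:ℂ)^n) ≠ 0 := pow_ne_zero n (by norm_num)
    have := pauli_expand A
    have : ((2:ℂ)^n)⁻¹ • ∑ f : Fin n → Fin 4,
        (pauliString f * A).trace • pauliString f = A := by
      rw [this, smul_smul, inv_mul_cancel₀ h2n, one_smul]
    rw [← this, Finset.smul_sum]
    refine Finset.sum_congr rfl fun f _ => ?_
    rw [smul_smul]
    congr 1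
    rw [hh]
    push_cast
    rw [hre f]
  -- norms of Pauli-transformed vectors
  have hPnorm : ∀ f : Fin n → Fin 4, ‖e ((pauliString f).mulVec ψ)‖ = 1 := by
    intro f
    have h2 : ‖e ((pauliString f).mulVec ψ)‖ ^ 2 = 1 := by
      rw [← clm_eq_mulVec, ← norm_sq_clm _ (pauliString_conjTranspose f),
        pauliString_mul_self, Matrix.one_mulVec, hψ]
      norm_num
    nlinarith [norm_nonneg (e ((pauliString f).mulVec ψ))]
  -- bound variance by the norm squared
  have hvar : matVar A ψ ≤ ‖e (A.mulVec ψ)‖ ^ 2 := by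
    rw [matVar, ← clm_eq_mulVec, ← norm_sq_clm _ hA]
    have : (0:ℝ) ≤ ((cinner ψ (A.mulVec ψ)).re) ^ 2 := sq_nonneg _
    linarith
  -- decompose A.mulVec ψ
  have hdecomp : e (A.mulVec ψ)
      = ∑ f : Fin n → Fin 4, ((h f : ℝ) : ℂ) • e ((pauliString f).mulVec ψ) := by
    rw [show A.mulVec ψ = ∑ f : Fin n → Fin 4,
        ((h f : ℝ) : ℂ) • (pauliString f).mulVec ψ by
      conv_lhs => rw [hexp]
      rw [sum_mulVec']
      exact Finset.sum_congr rfl fun f _ => Matrix.smul_mulVec _ _ _]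
    rw [he, WithLp.equiv_symm_apply, WithLp.toLp_sum]; simp only [WithLp.toLp_smul]
  calc Real.sqrt (matVar A ψ) ≤ Real.sqrt (‖e (A.mulVec ψ)‖ ^ 2) :=
        Real.sqrt_le_sqrt hvar
    _ = ‖e (A.mulVec ψ)‖ := by rw [Real.sqrt_sq (norm_nonneg _)]
    _ ≤ ∑ f : Fin n → Fin 4, |h f| := by
        rw [hdecomp]
        refine le_trans (norm_sum_le _ _) ?_
        refine le_of_eq (Finset.sum_congr rfl fun f _ => ?_)
        rw [norm_smul, hPnorm f, mul_one, Complex.norm_real, Real.norm_eq_abs]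

/-! ### Calculus lemmas for the unitary path -/

def ctLin (ι : Type*) [Fintype ι] [DecidableEq ι] :
    Matrix ι ι ℂ →ₗ[ℝ] Matrix ι ι ℂ where
  toFun M := Mᴴ
  map_add' M N := Matrix.conjTranspose_add M N
  map_smul' r M := by
    ext i j
    simp [Matrix.conjTranspose_apply, star_smul]

lemma hasDerivAt_conjTranspose {ι : Type*} [Fintype ι] [DecidableEq ι]
    {U : ℝ → Matrix ι ι ℂ} {U' : Matrix ι ι ℂ} {s : ℝ} (h : HasDerivAt U U' s) :
    HasDerivAt (fun t => (U t)ᴴ) U'ᴴ s := by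
  have := ((ctLin ι).toContinuousLinearMap.hasFDerivAt
    (x := U s)).comp_hasDerivAt s h
  exact this

lemma deriv_mul_conjTranspose_eq_zero {ι : Type*} [Fintype ι] [DecidableEq ι]
    (U : ℝ → Matrix ι ι ℂ)
    (hUdiff : ∀ s ∈ Icc (0:ℝ) 1, DifferentiableAt ℝ U s)
    (hUunit : ∀ s ∈ Icc (0:ℝ) 1, U s * (U s)ᴴ = 1)
    {s : ℝ} (hs : s ∈ Icc (0:ℝ) 1) :
    deriv U s * (U s)ᴴ + U s * (deriv U s)ᴴ = 0 := by
  have hU : HasDerivAt U (deriv U s) s := (hUdiff s hs).hasDerivAt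
  have hCT : HasDerivAt (fun t => (U t)ᴴ) (deriv U s)ᴴ s := hasDerivAt_conjTranspose hU
  have hprod : HasDerivAt (fun t => U t * (U t)ᴴ)
      (deriv U s * (U s)ᴴ + U s * (deriv U s)ᴴ) s := hU.mul hCT
  have h1 : deriv (fun t => U t * (U t)ᴴ) s = deriv U s * (U s)ᴴ + U s * (deriv U s)ᴴ :=
    hprod.deriv
  have h2 : deriv (fun t => U t * (U t)ᴴ) s = 0 := by
    have hud : UniqueDiffWithinAt ℝ (Icc (0:ℝ) 1) s :=
      (uniqueDiffOn_Icc one_pos) s hs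
    rw [← hprod.differentiableAt.derivWithin hud]
    rw [derivWithin_congr (fun t ht => hUunit t ht) (hUunit s hs)]
    exact congrFun (derivWithin_fun_const _ _) s
  rw [← h1, h2]

lemma generator_hermitian {ι : Type*} [Fintype ι] [DecidableEq ι]
    (U : ℝ → Matrix ι ι ℂ)
    (hUdiff : ∀ s ∈ Icc (0:ℝ) 1, DifferentiableAt ℝ U s)
    (hUunit : ∀ s ∈ Icc (0:ℝ) 1, U s * (U s)ᴴ = 1)
    {s : ℝ} (hs : s ∈ Icc (0:ℝ) 1) :
    (generator U s)ᴴ = generator U s := by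
  have hz := deriv_mul_conjTranspose_eq_zero U hUdiff hUunit hs
  have hneg : U s * (deriv U s)ᴴ = -(deriv U s * (U s)ᴴ) := by
    rw [eq_neg_iff_add_eq_zero, add_comm]
    exact hz
  rw [generator, Matrix.conjTranspose_smul, Matrix.conjTranspose_mul,
    Matrix.conjTranspose_conjTranspose, hneg]
  simp [smul_smul]

lemma cinner_mulVec_unit {ι : Type*} [Fintype ι] [DecidableEq ι]
    (A : Matrix ι ι ℂ) (hA : A * Aᴴ = 1) (ψ : ι → ℂ) (hψ : cinner ψ ψ = 1) :
    cinner (A.mulVec ψ) (A.mulVec ψ) = 1 := by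
  have hA' : Aᴴ * A = 1 := mul_eq_one_comm.mp hA
  have key : cinner ψ ((Aᴴ * A).mulVec ψ) = cinner (A.mulVec ψ) (A.mulVec ψ) := by
    rw [cinner_toCLM, _root_.map_mul]
    have hstar : toEuclideanCLM (𝕜 := ℂ) Aᴴ = star (toEuclideanCLM (𝕜 := ℂ) A) := by
      rw [← map_star, Matrix.star_eq_conjTranspose]
    rw [hstar, ContinuousLinearMap.mul_apply, ContinuousLinearMap.star_eq_adjoint,
      ContinuousLinearMap.adjoint_inner_right, clm_eq_mulVec, cinner_eq_inner]
  rw [← key, hA', Matrix.one_mulVec, hψ]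

/-! ### Continuity lemmas -/

lemma continuous_mulVecP {ι : Type*} [Fintype ι] :
    Continuous fun p : Matrix ι ι ℂ × (ι → ℂ) => p.1.mulVec p.2 := by
  refine continuous_pi fun i => ?_
  simp only [Matrix.mulVec, dotProduct]
  refine continuous_finset_sum _ fun j _ => ?_
  have h1 : Continuous fun p : Matrix ι ι ℂ × (ι → ℂ) => p.1 i j :=
    (continuous_apply j).comp ((continuous_apply i).comp continuous_fst)
  have h2 : Continuous fun p : Matrix ι ι ℂ × (ι → ℂ) => p.2 j :=
    (continuous_apply j).comp continuous_snd
  exact h1.mul h2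

lemma continuous_cinnerP {ι : Type*} [Fintype ι] :
    Continuous fun p : (ι → ℂ) × (ι → ℂ) => cinner p.1 p.2 := by
  refine continuous_finset_sum _ fun i _ => ?_
  exact (Complex.continuous_conj.comp ((continuous_apply i).comp continuous_fst)).mul
    ((continuous_apply i).comp continuous_snd)

lemma continuous_ct {ι : Type*} [Fintype ι] [DecidableEq ι] :
    Continuous fun M : Matrix ι ι ℂ => Mᴴ :=
  (ctLin ι).continuous_of_finiteDimensional

/-! ### Main theorem -/

set_option maxHeartbeats 1000000 in
theorem qfc_below_nielsen_cost (n : ℕ) (hn : 1 ≤ n)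
    (U : ℝ → Matrix (Fin n → Fin 2) (Fin n → Fin 2) ℂ)
    (hUdiff : ∀ s ∈ Icc (0:ℝ) 1, DifferentiableAt ℝ U s)
    (hUderiv : ContinuousOn (deriv U) (Icc (0:ℝ) 1))
    (hUunit : ∀ s ∈ Icc (0:ℝ) 1, U s * (U s)ᴴ = 1)
    (hU0 : U 0 = 1)
    (ψ₀ : (Fin n → Fin 2) → ℂ) (hψ₀ : cinner ψ₀ ψ₀ = 1) :
    (∫ s in (0:ℝ)..1, Real.sqrt (matVar (generator U s) ((U s).mulVec ψ₀))) ≤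
      ∫ s in (0:ℝ)..1, ∑ f : Fin n → Fin 4, |pauliCoeff U f s| := by
  have h01 : (0:ℝ) ≤ 1 := zero_le_one
  -- continuity facts
  have hUc : ContinuousOn U (Icc (0:ℝ) 1) :=
    fun s hs => (hUdiff s hs).continuousAt.continuousWithinAt
  have hUe : ∀ x y, ContinuousOn (fun s => U s x y) (Icc (0:ℝ) 1) := fun x y =>
    ((continuous_apply y).comp
      (continuous_apply (A := fun _ : Fin n → Fin 2 => (Fin n → Fin 2) → ℂ) x)
      ).comp_continuousOn hUc
  have hU'e : ∀ x y, ContinuousOn (fun s => deriv U s x y) (Icc (0:ℝ) 1) := fun x y =>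
    ((continuous_apply y).comp
      (continuous_apply (A := fun _ : Fin n → Fin 2 => (Fin n → Fin 2) → ℂ) x)
      ).comp_continuousOn hUderiv
  have hGe : ∀ x y, ContinuousOn (fun s => generator U s x y) (Icc (0:ℝ) 1) := by
    intro x y
    have hrw : (fun s => generator U s x y)
        = fun s => Complex.I * ∑ k, deriv U s x k * star (U s y k) := by
      funext s
      simp [generator, Matrix.mul_apply, Matrix.conjTranspose_apply]
    rw [hrw]
    exact continuousOn_const.mul (continuousOn_finset_sum _ fun k _ =>
      (hU'e x k).mul (continuous_star.comp_continuousOn (hUe y k)))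
  have hve : ∀ x, ContinuousOn (fun s => (U s).mulVec ψ₀ x) (Icc (0:ℝ) 1) := by
    intro x
    have hrw : (fun s => (U s).mulVec ψ₀ x) = fun s => ∑ j, U s x j * ψ₀ j := by
      funext s; simp [Matrix.mulVec, dotProduct]
    rw [hrw]
    exact continuousOn_finset_sum _ fun j _ => (hUe x j).mul continuousOn_const
  have hGve : ∀ x, ContinuousOn
      (fun s => (generator U s).mulVec ((U s).mulVec ψ₀) x) (Icc (0:ℝ) 1) := by
    intro x
    have hrw : (fun s => (generator U s).mulVec ((U s).mulVec ψ₀) x)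
        = fun s => ∑ j, generator U s x j * (U s).mulVec ψ₀ j := by
      funext s; simp [Matrix.mulVec, dotProduct]
    rw [hrw]
    exact continuousOn_finset_sum _ fun j _ => (hGe x j).mul (hve j)
  have hGGve : ∀ x, ContinuousOn
      (fun s => ((generator U s * generator U s).mulVec ((U s).mulVec ψ₀)) x)
      (Icc (0:ℝ) 1) := by
    intro x
    have hrw : (fun s => ((generator U s * generator U s).mulVec ((U s).mulVec ψ₀)) x)
        = fun s => ∑ j, (∑ k, generator U s x k * generator U s k j)
            * (U s).mulVec ψ₀ j := by
      funext s
      simp [Matrix.mulVec, dotProduct, Matrix.mul_apply]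
    rw [hrw]
    exact continuousOn_finset_sum _ fun j _ =>
      (continuousOn_finset_sum _ fun k _ => (hGe x k).mul (hGe k j)).mul (hve j)
  have hF1c : ContinuousOn
      (fun s => Real.sqrt (matVar (generator U s) ((U s).mulVec ψ₀)))
      (Icc (0:ℝ) 1) := by
    refine Real.continuous_sqrt.comp_continuousOn ?_
    unfold matVar cinner
    refine ContinuousOn.sub ?_ (ContinuousOn.pow ?_ 2)
    · exact Complex.continuous_re.comp_continuousOn
        (continuousOn_finset_sum _ fun i _ =>
          (continuous_star.comp_continuousOn (hve i)).mul (hGGve i))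
    · exact Complex.continuous_re.comp_continuousOn
        (continuousOn_finset_sum _ fun i _ =>
          (continuous_star.comp_continuousOn (hve i)).mul (hGve i))
  have hF2c : ContinuousOn
      (fun s => ∑ f : Fin n → Fin 4, |pauliCoeff U f s|) (Icc (0:ℝ) 1) := by
    refine continuousOn_finset_sum _ fun f _ => ?_
    have hrw : pauliCoeff U f
        = fun s => ((2:ℝ)^n)⁻¹
            * (∑ x, ∑ y, pauliString f x y * generator U s y x).re := by
      funext s
      unfold pauliCoeff
      simp [Matrix.trace, Matrix.diag, Matrix.mul_apply]
    refine ContinuousOn.abs ?_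
    rw [hrw]
    exact continuousOn_const.mul (Complex.continuous_re.comp_continuousOn
      (continuousOn_finset_sum _ fun x _ => continuousOn_finset_sum _ fun y _ =>
        continuousOn_const.mul (hGe y x)))
  -- pointwise bound
  have hpt : ∀ s ∈ Icc (0:ℝ) 1,
      Real.sqrt (matVar (generator U s) ((U s).mulVec ψ₀))
        ≤ ∑ f : Fin n → Fin 4, |pauliCoeff U f s| := by
    intro s hs
    have hherm := generator_hermitian U hUdiff hUunit hs
    have hunit := cinner_mulVec_unit (U s) (hUunit s hs) ψ₀ hψ₀
    exact sqrt_matVar_le (generator U s) hherm _ hunit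
  -- integrability
  have hi1 : IntervalIntegrable
      (fun s => Real.sqrt (matVar (generator U s) ((U s).mulVec ψ₀)))
      volume 0 1 := by
    apply ContinuousOn.intervalIntegrable
    rwa [uIcc_of_le h01]
  have hi2 : IntervalIntegrable
      (fun s => ∑ f : Fin n → Fin 4, |pauliCoeff U f s|) volume 0 1 := by
    apply ContinuousOn.intervalIntegrable
    rwa [uIcc_of_le h01]
  exact intervalIntegral.integral_mono_on h01 hi1 hi2 hpt
end
end

section
/- Second inequality of Theorem 1, pure-state form (Bures distance is below the quantum Fisher complexity / Fubini–Study arclength bound): Let E be a finite-dimensional complex inner product space and let ψ : ℝ → E be continuously differentiable on [0,1] with ‖ψ(s)‖ = 1 for every s ∈ [0,1]. Then √(2·(1 − |⟨ψ(0), ψ(1)⟩|)) ≤ ∫₀¹ √(‖ψ'(s)‖² − |⟨ψ(s), ψ'(s)⟩|²) ds. (The left-hand side is the Bures distance D_B between the pure states |ψ(0)⟩⟨ψ(0)| and |ψ(1)⟩⟨ψ(1)|, and the integrand is (1/2)√(F_Q(s)), where F_Q(s) = 4(‖ψ'(s)‖² − |⟨ψ(s), ψ'(s)⟩|²) is the pure-state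 quantum Fisher information of the path.) -/
/-!
STATEMENT 2: Second inequality of Theorem 1, pure-state form (Bures distance is below
the quantum Fisher complexity / Fubini–Study arclength bound):
`√(2·(1 − |⟨ψ(0), ψ(1)⟩|)) ≤ ∫₀¹ √(‖ψ'(s)‖² − |⟨ψ(s), ψ'(s)⟩|²) ds`.
-/

noncomputable section

open MeasureTheory Set
open scoped ComplexInnerProductSpace

theorem bures_below_qfc {E : Type*} [NormedAddCommGroup E] [InnerProductSpace ℂ E]
    [FiniteDimensional ℂ E]
    (ψ : ℝ → E)
    (hdiff : ∀ s ∈ Icc (0:ℝ) 1, DifferentiableAt ℝ ψ s)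
    (hderiv : ContinuousOn (deriv ψ) (Icc (0:ℝ) 1))
    (hnorm : ∀ s ∈ Icc (0:ℝ) 1, ‖ψ s‖ = 1) :
    Real.sqrt (2 * (1 - ‖⟪ψ 0, ψ 1⟫‖)) ≤
      ∫ s in (0:ℝ)..1,
        Real.sqrt (‖deriv ψ s‖ ^ 2 - ‖⟪ψ s, deriv ψ s⟫‖ ^ 2) := by
  have h01 : (0:ℝ) ≤ 1 := zero_le_one
  have hmem0 : (0:ℝ) ∈ Icc (0:ℝ) 1 := ⟨le_rfl, h01⟩
  have hmem1 : (1:ℝ) ∈ Icc (0:ℝ) 1 := ⟨h01, le_rfl⟩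
  set g : ℝ → ℝ := fun s => (⟪ψ s, deriv ψ s⟫ : ℂ).im with hg_def
  have hψc : ContinuousOn ψ (Icc (0:ℝ) 1) :=
    fun s hs => (hdiff s hs).continuousAt.continuousWithinAt
  have hgc : ContinuousOn g (Icc (0:ℝ) 1) :=
    Complex.continuous_im.comp_continuousOn (hψc.inner hderiv)
  have hgint : IntervalIntegrable g volume 0 1 := by
    apply ContinuousOn.intervalIntegrable
    rwa [uIcc_of_le h01]
  set θ : ℝ → ℝ := fun s => ∫ t in (0:ℝ)..s, g t with hθ_def
  have hθc : ContinuousOn θ (Icc (0:ℝ) 1) := by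
    have := intervalIntegral.continuousOn_primitive_interval
      (μ := volume) (f := g) (a := 0) (b := 1) ?_
    · rwa [uIcc_of_le h01] at this
    · rw [uIcc_of_le h01]
      rwa [intervalIntegrable_iff_integrableOn_Icc_of_le h01] at hgint
  -- θ derivative on interior
  have hθd : ∀ s ∈ Ioo (0:ℝ) 1, HasDerivAt θ (g s) s := by
    intro s hs
    have hs' : s ∈ Icc (0:ℝ) 1 := Ioo_subset_Icc_self hs
    have hnhds : Icc (0:ℝ) 1 ∈ nhds s := Icc_mem_nhds hs.1 hs.2
    have hcg : ContinuousAt g s := hgc.continuousAt hnhds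
    exact intervalIntegral.integral_hasDerivAt_right
      (hgint.mono_set (by rw [uIcc_of_le h01, uIcc_of_le hs'.1]; exact Icc_subset_Icc le_rfl hs'.2))
      (AEStronglyMeasurable.stronglyMeasurableAtFilter_of_mem (hgc.aestronglyMeasurable measurableSet_Icc) hnhds) hcg
  set c : ℝ → ℂ := fun s => Complex.exp (-(θ s : ℂ) * Complex.I) with hc_def
  set φ : ℝ → E := fun s => c s • ψ s with hφ_def
  set F : ℝ → E := fun s => c s • (deriv ψ s - ((g s : ℂ) * Complex.I) • ψ s) with hF_def
  have hcc : ContinuousOn c (Icc (0:ℝ) 1) :=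
    Complex.continuous_exp.comp_continuousOn
      ((Complex.continuous_ofReal.comp_continuousOn hθc).neg.mul continuousOn_const)
  have hφcont : ContinuousOn φ (Icc (0:ℝ) 1) := hcc.smul hψc
  have hFcont : ContinuousOn F (Icc (0:ℝ) 1) :=
    hcc.smul (hderiv.sub (((Complex.continuous_ofReal.comp_continuousOn hgc).mul
      continuousOn_const).smul hψc))
  have habs_c : ∀ s, ‖c s‖ = 1 := by
    intro s
    rw [hc_def]
    simp [Complex.norm_exp]
  -- derivative of φ on interior
  have hφd : ∀ s ∈ Ioo (0:ℝ) 1, HasDerivAt φ (F s) s := by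
    intro s hs
    have hs' : s ∈ Icc (0:ℝ) 1 := Ioo_subset_Icc_self hs
    have h1 : HasDerivAt (fun t => ((θ t : ℂ))) ((g s : ℂ)) s := (hθd s hs).ofReal_comp
    have h2 : HasDerivAt (fun t => -(θ t : ℂ) * Complex.I) (-(g s : ℂ) * Complex.I) s :=
      h1.neg.mul_const _
    have h3 : HasDerivAt c (c s * (-(g s : ℂ) * Complex.I)) s := h2.cexp
    have h4 := h3.smul (hdiff s hs').hasDerivAt
    convert h4 using 1
    · rfl
    rw [hF_def]
    have hq : c s * (g s : ℂ) * Complex.I = -(c s * (-(g s:ℂ) * Complex.I)) := by ring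
    simp only [smul_sub, smul_smul]
    rw [← mul_assoc, hq, neg_smul, sub_neg_eq_add, add_comm]
  -- Re of inner vanishes on interior
  have hinner : ∀ s ∈ Ioo (0:ℝ) 1, (⟪ψ s, deriv ψ s⟫ : ℂ) = (g s : ℂ) * Complex.I := by
    intro s hs
    have hs' : s ∈ Icc (0:ℝ) 1 := Ioo_subset_Icc_self hs
    have hnhds : Icc (0:ℝ) 1 ∈ nhds s := Icc_mem_nhds hs.1 hs.2
    have hd : HasDerivAt (fun t => (⟪ψ t, ψ t⟫ : ℂ))
        (⟪ψ s, deriv ψ s⟫ + ⟪deriv ψ s, ψ s⟫) s :=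
      (hdiff s hs').hasDerivAt.inner ℂ (hdiff s hs').hasDerivAt
    have hconst : (fun t => (⟪ψ t, ψ t⟫ : ℂ)) =ᶠ[nhds s] fun _ => (1:ℂ) := by
      filter_upwards [hnhds] with t ht
      rw [inner_self_eq_norm_sq_to_K, hnorm t ht]
      norm_num
    have hd0 : HasDerivAt (fun t => (⟪ψ t, ψ t⟫ : ℂ)) 0 s :=
      (hasDerivAt_const s (1:ℂ)).congr_of_eventuallyEq hconst
    have huniq : (⟪ψ s, deriv ψ s⟫ : ℂ) + ⟪deriv ψ s, ψ s⟫ = 0 := hd.unique hd0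
    have hre : (⟪ψ s, deriv ψ s⟫ : ℂ).re = 0 := by
      have := congrArg Complex.re huniq
      simp only [Complex.add_re, Complex.zero_re] at this
      rw [← inner_conj_symm (deriv ψ s) (ψ s), Complex.conj_re] at this
      linarith
    apply Complex.ext <;> simp [hre, hg_def]
  -- FTC
  have hFint : IntervalIntegrable F volume 0 1 := by
    apply ContinuousOn.intervalIntegrable
    rwa [uIcc_of_le h01]
  have hftc : ∫ s in (0:ℝ)..1, F s = φ 1 - φ 0 :=
    intervalIntegral.integral_eq_sub_of_hasDeriv_right_of_le h01 hφcont
      (fun x hx => (hφd x hx).hasDerivWithinAt) hFint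
  -- integrand equality a.e.
  have hFnorm : ∀ s ∈ Ioo (0:ℝ) 1,
      ‖F s‖ = Real.sqrt (‖deriv ψ s‖ ^ 2 - ‖⟪ψ s, deriv ψ s⟫‖ ^ 2) := by
    intro s hs
    have hs' : s ∈ Icc (0:ℝ) 1 := Ioo_subset_Icc_self hs
    have h1 : ‖F s‖ = ‖deriv ψ s - ((g s : ℂ) * Complex.I) • ψ s‖ := by
      rw [hF_def]
      simp only [norm_smul]
      rw [habs_c s, one_mul]
    have hip : (⟪deriv ψ s, ψ s⟫ : ℂ) = -(g s : ℂ) * Complex.I := by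
      have h := congrArg (starRingEnd ℂ) (hinner s hs)
      rw [inner_conj_symm] at h
      rw [h]
      simp [Complex.ext_iff]
    have h2 : ‖deriv ψ s - ((g s : ℂ) * Complex.I) • ψ s‖ ^ 2
        = ‖deriv ψ s‖ ^ 2 - (g s) ^ 2 := by
      rw [@norm_sub_sq ℂ]
      rw [inner_smul_right, hip, norm_smul, hnorm s hs']
      simp only [norm_mul, Complex.norm_real, Real.norm_eq_abs, Complex.norm_I, mul_one]
      have : (RCLike.re (((g s : ℂ) * Complex.I) * (-(g s : ℂ) * Complex.I)) : ℝ) = (g s)^2 := by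
        have : ((g s : ℂ) * Complex.I) * (-(g s : ℂ) * Complex.I) = ((g s)^2 : ℝ) := by
          rw [Complex.ofReal_pow]; rw [mul_assoc, mul_comm Complex.I, mul_assoc,
            Complex.I_mul_I]; ring
        rw [this]
        exact Complex.ofReal_re _
      rw [this]
      rw [sq_abs]
      ring
    have h3 : ‖(⟪ψ s, deriv ψ s⟫ : ℂ)‖ ^ 2 = (g s) ^ 2 := by
      rw [hinner s hs]
      simp only [norm_mul, Complex.norm_real, Real.norm_eq_abs, Complex.norm_I, mul_one]
      exact sq_abs _
    rw [h1, h3, ← h2, Real.sqrt_sq (norm_nonneg _)]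
  have hae : ∫ s in (0:ℝ)..1, ‖F s‖
      = ∫ s in (0:ℝ)..1, Real.sqrt (‖deriv ψ s‖ ^ 2 - ‖⟪ψ s, deriv ψ s⟫‖ ^ 2) := by
    apply intervalIntegral.integral_congr_ae
    have hone : ∀ᵐ x : ℝ ∂volume, x ≠ 1 :=
      compl_mem_ae_iff.2 (measure_singleton (1:ℝ))
    filter_upwards [hone] with x hx hxI
    rw [uIoc_of_le h01] at hxI
    exact hFnorm x ⟨hxI.1, lt_of_le_of_ne hxI.2 hx⟩
  -- LHS bound
  have hφ01 : ‖⟪φ 1, φ 0⟫‖ = ‖⟪ψ 0, ψ 1⟫‖ := by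
    rw [hφ_def]
    simp only [inner_smul_left, inner_smul_right]
    rw [norm_mul, norm_mul, Complex.norm_conj, habs_c, habs_c, one_mul, one_mul]
    rw [← inner_conj_symm (ψ 0), Complex.norm_conj]
  have hφn : ‖φ 0‖ = 1 ∧ ‖φ 1‖ = 1 := by
    constructor <;>
    · rw [hφ_def]; simp only [norm_smul, habs_c, one_mul]
      first | exact hnorm 0 hmem0 | exact hnorm 1 hmem1
  have hchord : Real.sqrt (2 * (1 - ‖⟪ψ 0, ψ 1⟫‖)) ≤ ‖φ 1 - φ 0‖ := by
    have hsq : ‖φ 1 - φ 0‖ ^ 2 = 2 - 2 * (RCLike.re (⟪φ 1, φ 0⟫ : ℂ)) := by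
      rw [@norm_sub_sq ℂ, hφn.1, hφn.2]; ring
    have hrele : (⟪φ 1, φ 0⟫ : ℂ).re ≤ ‖⟪φ 1, φ 0⟫‖ := Complex.re_le_norm _
    have h2 : 2 * (1 - ‖⟪ψ 0, ψ 1⟫‖) ≤ ‖φ 1 - φ 0‖ ^ 2 := by
      rw [hsq, ← hφ01]
      simp only [RCLike.re_to_complex]
      linarith
    calc Real.sqrt (2 * (1 - ‖⟪ψ 0, ψ 1⟫‖)) ≤ Real.sqrt (‖φ 1 - φ 0‖ ^ 2) :=
          Real.sqrt_le_sqrt h2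
      _ = ‖φ 1 - φ 0‖ := Real.sqrt_sq (norm_nonneg _)
  calc Real.sqrt (2 * (1 - ‖⟪ψ 0, ψ 1⟫‖)) ≤ ‖φ 1 - φ 0‖ := hchord
    _ = ‖∫ s in (0:ℝ)..1, F s‖ := by rw [hftc]
    _ ≤ ∫ s in (0:ℝ)..1, ‖F s‖ := intervalIntegral.norm_integral_le_integral_norm h01
    _ = _ := hae
end
end
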